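/- For every integer k ≥ 1, the extended multiple zeta value ζ^{ℓsℓs...ℓsℓ}_{21...1} (weight 2k+1, depth 2k, first exponent 2 followed by 2k−1 ones, inequality pattern alternating ℓ,s,ℓ,s,...,ℓ) equals ζ^{ℓ...ℓ}_{2...21} (k twos followed by a one, all inequalities non-strict). Explicitly: Σ_{k₁ ≥ k₂ > k₃ ≥ k₄ > ... ≥ k_{2k} ≥ 1} 1/(k₁² k₂ k₃ ⋯ k_{2k}) = Σ_{m₁ ≥ m₂ ≥ ... ≥ m_{k+1} ≥ 1} 1/(m₁² m₂² ⋯ m_k² m_{k+1}). -/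

import Mathlib

open scoped ENNReal

noncomputable section ExtendedMZVAux

/-- real connector `m! n! / (m+n)!` -/
def br (m n : ℕ) : ℝ := (m.factorial * n.factorial : ℝ) / (m + n).factorial

lemma br_pos (m n : ℕ) : 0 < br m n := by
  apply div_pos <;> positivity

lemma br_nonneg (m n : ℕ) : 0 ≤ br m n := (br_pos m n).le

lemma br_comm (m n : ℕ) : br m n = br n m := by
  unfold br; rw [mul_comm, Nat.add_comm]

lemma br_zero (n : ℕ) : br 0 n = 1 := by
  unfold br; simp [Nat.factorial_ne_zero]

/-- key recurrence: `br (m+1) n * (m+1+n) = br m n * (m+1)` -/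
lemma br_rec (m n : ℕ) : br (m + 1) n * ((m : ℝ) + 1 + n) = br m n * ((m : ℝ) + 1) := by
  unfold br
  have h1 : ((m + 1 + n).factorial : ℝ) = ((m + n).factorial : ℝ) * ((m : ℝ) + 1 + n) := by
    have : m + 1 + n = (m + n) + 1 := by omega
    rw [this, Nat.factorial_succ]; push_cast; ring
  have h2 : ((m + 1).factorial : ℝ) = ((m : ℝ) + 1) * m.factorial := by
    rw [Nat.factorial_succ]; push_cast; ring
  have hne : ((m + n).factorial : ℝ) ≠ 0 := by positivity
  have hne2 : ((m : ℝ) + 1 + n) ≠ 0 := by positivity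
  rw [h1, h2, div_mul_eq_mul_div, div_mul_eq_mul_div, div_eq_div_iff (mul_ne_zero hne hne2) hne]
  ring

/-- telescoping form: `br m n - br (m+1) n = br (m+1) n * n / (m+1)` i.e.
`br (m+1) n / (m+1) = (br m n - br (m+1) n)/n`. We state it multiplication-form. -/
lemma br_tel (m n : ℕ) : br (m + 1) n / ((m : ℝ) + 1) * n = br m n - br (m + 1) n := by
  have h := br_rec m n
  have hne : ((m : ℝ) + 1) ≠ 0 := by positivity
  field_simp
  nlinarith [h]

lemma br_antitone_right (m : ℕ) : ∀ a b : ℕ, a ≤ b → br m b ≤ br m a := by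
  have step : ∀ n : ℕ, br m (n + 1) ≤ br m n := by
    intro n
    rw [br_comm m (n+1), br_comm m n]
    have h := br_rec n m
    have h1 : (0:ℝ) < (n:ℝ) + 1 := by positivity
    have h2 : (0:ℝ) < (n:ℝ) + 1 + m := by positivity
    nlinarith [br_pos (n+1) m, br_pos n m]
  intro a b hab
  induction b with
  | zero => simp_all
  | succ b ih =>
    rcases Nat.eq_or_lt_of_le hab with h | h
    · subst h; rfl
    · exact le_trans (step b) (ih (by omega))

lemma br_le (m n : ℕ) (hn : 1 ≤ n) : br m n ≤ 1 / ((m : ℝ) + 1) := by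
  have h := br_antitone_right m 1 n hn
  have : br m 1 = 1 / ((m : ℝ) + 1) := by
    unfold br
    rw [Nat.factorial_one, Nat.factorial_succ]
    push_cast
    rw [div_eq_div_iff (by positivity) (by positivity)]
    ring
  linarith [this ▸ h]

lemma br_tendsto (n : ℕ) (hn : 1 ≤ n) :
    Filter.Tendsto (fun m : ℕ => br m n) Filter.atTop (nhds 0) := by
  apply squeeze_zero (fun m => br_nonneg m n) (fun m => br_le m n hn)
  have : Filter.Tendsto (fun m : ℕ => ((m : ℝ) + 1)) Filter.atTop Filter.atTop := by
    apply Filter.tendsto_atTop_add_const_right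
    exact tendsto_natCast_atTop_atTop
  simpa [one_div, Pi.inv_def] using this.inv_tendsto_atTop

/-- The fundamental telescoping sum: `∑_{i} br (M+1+i) n / (M+1+i) = br M n / n`. -/
lemma br_hasSum (M n : ℕ) (hn : 1 ≤ n) :
    HasSum (fun i : ℕ => br (M + 1 + i) n / (M + 1 + i)) (br M n / n) := by
  have hnonneg : ∀ i : ℕ, 0 ≤ br (M + 1 + i) n / (M + 1 + i : ℕ) := by
    intro i; apply div_nonneg (br_nonneg _ _); positivity
  rw [hasSum_iff_tendsto_nat_of_nonneg (by intro i; push_cast at hnonneg ⊢; exact hnonneg i)]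
  have hterm : ∀ i : ℕ, br (M + 1 + i) n / ((M : ℝ) + 1 + i)
      = (br (M + i) n - br (M + (i + 1)) n) / n := by
    intro i
    have h := br_tel (M + i) n
    have hn0 : (n : ℝ) ≠ 0 := by positivity
    rw [eq_div_iff hn0]
    have h1 : M + 1 + i = (M + i) + 1 := by omega
    have h2 : M + (i + 1) = (M + i) + 1 := by omega
    rw [h1, h2, ← h]
    have : ((M:ℝ) + 1 + i) = ((M + i : ℕ) : ℝ) + 1 := by push_cast; ring
    rw [this]
  have hpart : ∀ N : ℕ, ∑ i ∈ Finset.range N, br (M + 1 + i) n / ((M:ℝ) + 1 + i)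
      = (br M n - br (M + N) n) / n := by
    intro N
    simp_rw [hterm]
    rw [← Finset.sum_div]
    congr 1
    have := Finset.sum_range_sub' (fun i => br (M + i) n) N
    simpa using this
  have hrw : (fun N : ℕ => ∑ i ∈ Finset.range N, br (M + 1 + i) n / ((M:ℝ) + 1 + i))
      = fun N => (br M n - br (M + N) n) / n := funext hpart
  rw [hrw]
  have hb : Filter.Tendsto (fun N : ℕ => br (M + N) n) Filter.atTop (nhds 0) := by
    have h1 : Filter.Tendsto (fun N : ℕ => N + M) Filter.atTop Filter.atTop :=
      Filter.tendsto_add_atTop_nat M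
    have := (br_tendsto n hn).comp h1
    simpa [Function.comp_def, Nat.add_comm] using this
  have := ((tendsto_const_nhds (x := br M n)).sub hb).div_const (n : ℝ)
  simpa using this


/-- ENNReal connector -/
def bb (m n : ℕ) : ℝ≥0∞ := ENNReal.ofReal (br m n)

lemma bb_comm (m n : ℕ) : bb m n = bb n m := by rw [bb, bb, br_comm]

lemma bb_zero (n : ℕ) : bb 0 n = 1 := by rw [bb, br_zero, ENNReal.ofReal_one]

lemma ofReal_div_nat (x : ℝ) (m : ℕ) (hm : 1 ≤ m) :
    ENNReal.ofReal (x / m) = ENNReal.ofReal x * ((m : ℝ≥0∞))⁻¹ := by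
  rw [ENNReal.ofReal_div_of_pos (by exact_mod_cast hm), ENNReal.ofReal_natCast,
    div_eq_mul_inv]

lemma bb_mul_inv (a c m : ℕ) (hm : 1 ≤ m) :
    bb a c * ((m : ℝ≥0∞))⁻¹ = ENNReal.ofReal (br a c / m) := by
  rw [ofReal_div_nat _ _ hm, bb]

/-- real shift identity -/
lemma br_shift (a b : ℕ) : br a (b + 1) / ((b : ℝ) + 1) = br (a + 1) b / ((a : ℝ) + 1) := by
  unfold br
  have hab : a + (b+1) = a + 1 + b := by omega
  rw [Nat.factorial_succ b, Nat.factorial_succ a, hab]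
  have hne : ((a + 1 + b).factorial : ℝ) ≠ 0 := by positivity
  push_cast
  rw [div_div, div_div, div_eq_div_iff (by positivity) (by positivity)]
  ring

lemma bb_shift (a b : ℕ) :
    bb a (b + 1) * (((b + 1 : ℕ) : ℝ≥0∞))⁻¹ = bb (a + 1) b * (((a + 1 : ℕ) : ℝ≥0∞))⁻¹ := by
  rw [bb_mul_inv _ _ _ (by omega), bb_mul_inv _ _ _ (by omega)]
  congr 1
  have := br_shift a b
  push_cast
  convert this using 2 <;> push_cast <;> ring

/-- the equiv `ℕ ≃ {x // M + 1 ≤ x}` -/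
def natShift (M : ℕ) : ℕ ≃ {x : ℕ // M + 1 ≤ x} where
  toFun i := ⟨M + 1 + i, by omega⟩
  invFun x := x.1 - (M + 1)
  left_inv i := by simp
  right_inv x := by ext; have := x.2; simp; omega

/-- Lemma A: `∑_{m ≥ M+1} bb m n / m = bb M n / n` (n ≥ 1). -/
lemma lemA (M n : ℕ) (hn : 1 ≤ n) :
    ∑' m : {x : ℕ // M + 1 ≤ x}, bb m.1 n * ((m.1 : ℝ≥0∞))⁻¹ = bb M n * ((n : ℝ≥0∞))⁻¹ := by
  rw [← Equiv.tsum_eq (natShift M)]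
  have hterm : ∀ i : ℕ, bb ((natShift M i).1) n * (((natShift M i).1 : ℝ≥0∞))⁻¹
      = ENNReal.ofReal (br (M + 1 + i) n / ((M : ℝ) + 1 + i)) := by
    intro i
    have : (natShift M i).1 = M + 1 + i := rfl
    rw [this, bb_mul_inv _ _ _ (by omega)]
    congr 1
    push_cast; ring_nf
  rw [tsum_congr hterm]
  have hs := br_hasSum M n hn
  rw [← ENNReal.ofReal_tsum_of_nonneg
    (fun i => div_nonneg (br_nonneg _ _) (by positivity)) hs.summable, hs.tsum_eq,
    bb_mul_inv _ _ _ hn]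

/-- Lemma A with swapped roles: `∑_{x ≥ M+1} bb m x / x = bb m M / m` (m ≥ 1). -/
lemma lemA' (m M : ℕ) (hm : 1 ≤ m) :
    ∑' x : {x : ℕ // M + 1 ≤ x}, bb m x.1 * ((x.1 : ℝ≥0∞))⁻¹ = bb m M * ((m : ℝ≥0∞))⁻¹ := by
  have := lemA M m hm
  calc ∑' x : {x : ℕ // M + 1 ≤ x}, bb m x.1 * ((x.1 : ℝ≥0∞))⁻¹
      = ∑' x : {x : ℕ // M + 1 ≤ x}, bb x.1 m * ((x.1 : ℝ≥0∞))⁻¹ := by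
        apply tsum_congr; intro x; rw [bb_comm]
    _ = bb M m * ((m : ℝ≥0∞))⁻¹ := this
    _ = bb m M * ((m : ℝ≥0∞))⁻¹ := by rw [bb_comm]

lemma lemA_le (M n : ℕ) (hM : 1 ≤ M) (hn : 1 ≤ n) :
    ∑' m : {x : ℕ // M ≤ x}, bb m.1 n * ((m.1 : ℝ≥0∞))⁻¹ = bb (M - 1) n * ((n : ℝ≥0∞))⁻¹ := by
  obtain ⟨M', rfl⟩ : ∃ M', M = M' + 1 := ⟨M - 1, by omega⟩
  simpa using lemA M' n hn

lemma lemA'_le (m M : ℕ) (hm : 1 ≤ m) (hM : 1 ≤ M) :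
    ∑' x : {x : ℕ // M ≤ x}, bb m x.1 * ((x.1 : ℝ≥0∞))⁻¹ = bb m (M - 1) * ((m : ℝ≥0∞))⁻¹ := by
  obtain ⟨M', rfl⟩ : ∃ M', M = M' + 1 := ⟨M - 1, by omega⟩
  simpa using lemA' m M' hm

/-- splitting equiv for pairs -/
def pairSplit (p : ℕ) : {q : ℕ × ℕ // q.2 ≤ q.1 ∧ p < q.2}
    ≃ Σ μ : {x : ℕ // p < x}, {m : ℕ // μ.1 ≤ m} where
  toFun q := ⟨⟨q.1.2, q.2.2⟩, ⟨q.1.1, q.2.1⟩⟩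
  invFun x := ⟨(x.2.1, x.1.1), x.2.2, x.1.2⟩
  left_inv q := rfl
  right_inv x := rfl

/-- Lemma D: pair transport. -/
lemma lemD (p ν : ℕ) (hν : 1 ≤ ν) :
    ∑' q : {q : ℕ × ℕ // q.2 ≤ q.1 ∧ p < q.2},
      bb q.1.1 ν * ((q.1.1 : ℝ≥0∞))⁻¹ * ((q.1.2 : ℝ≥0∞))⁻¹
    = ∑' x : {x : ℕ // ν ≤ x}, bb p x.1 * ((x.1 : ℝ≥0∞))⁻¹ * ((x.1 : ℝ≥0∞))⁻¹ := by
  -- LHS = MID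
  have hL : ∑' q : {q : ℕ × ℕ // q.2 ≤ q.1 ∧ p < q.2},
      bb q.1.1 ν * ((q.1.1 : ℝ≥0∞))⁻¹ * ((q.1.2 : ℝ≥0∞))⁻¹
      = ∑' m : {x : ℕ // p < x}, bb m.1 (ν - 1) * ((m.1 : ℝ≥0∞))⁻¹ * ((m.1 : ℝ≥0∞))⁻¹ := by
    rw [← Equiv.tsum_eq (pairSplit p).symm]
    have hre : ∑' c : Σ μ : {x : ℕ // p < x}, {m : ℕ // μ.1 ≤ m},
        bb (((pairSplit p).symm c).1.1) ν * (((((pairSplit p).symm c)).1.1 : ℝ≥0∞))⁻¹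
          * (((((pairSplit p).symm c)).1.2 : ℝ≥0∞))⁻¹
        = ∑' c : Σ μ : {x : ℕ // p < x}, {m : ℕ // μ.1 ≤ m},
          bb c.2.1 ν * ((c.2.1 : ℝ≥0∞))⁻¹ * ((c.1.1 : ℝ≥0∞))⁻¹ :=
      tsum_congr fun c => rfl
    rw [hre, ENNReal.tsum_sigma'
      (f := fun c : Σ μ : {x : ℕ // p < x}, {m : ℕ // μ.1 ≤ m} =>
        bb c.2.1 ν * ((c.2.1 : ℝ≥0∞))⁻¹ * ((c.1.1 : ℝ≥0∞))⁻¹)]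
    apply tsum_congr
    intro μ
    have hμ1 : 1 ≤ μ.1 := by have := μ.2; omega
    calc ∑' m : {m : ℕ // μ.1 ≤ m}, bb m.1 ν * ((m.1 : ℝ≥0∞))⁻¹ * ((μ.1 : ℝ≥0∞))⁻¹
        = (∑' m : {m : ℕ // μ.1 ≤ m}, bb m.1 ν * ((m.1 : ℝ≥0∞))⁻¹)
            * ((μ.1 : ℝ≥0∞))⁻¹ := ENNReal.tsum_mul_right
      _ = bb (μ.1 - 1) ν * ((ν : ℝ≥0∞))⁻¹ * ((μ.1 : ℝ≥0∞))⁻¹ := by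
          rw [lemA_le μ.1 ν hμ1 hν]
      _ = bb (μ.1 - 1) ((ν - 1) + 1) * ((((ν - 1) + 1 : ℕ) : ℝ≥0∞))⁻¹ * ((μ.1 : ℝ≥0∞))⁻¹ := by
          have h : (ν - 1) + 1 = ν := by omega
          rw [h]
      _ = bb ((μ.1 - 1) + 1) (ν - 1) * ((((μ.1 - 1) + 1 : ℕ) : ℝ≥0∞))⁻¹ * ((μ.1 : ℝ≥0∞))⁻¹ := by
          rw [bb_shift]
      _ = bb μ.1 (ν - 1) * ((μ.1 : ℝ≥0∞))⁻¹ * ((μ.1 : ℝ≥0∞))⁻¹ := by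
          have h : (μ.1 - 1) + 1 = μ.1 := by omega
          rw [h]
  rw [hL]
  -- RHS = MID
  have hR : ∀ x : {x : ℕ // ν ≤ x},
      bb p x.1 * ((x.1 : ℝ≥0∞))⁻¹ * ((x.1 : ℝ≥0∞))⁻¹
      = ∑' m : {y : ℕ // p < y}, bb m.1 x.1 * ((m.1 : ℝ≥0∞))⁻¹ * ((x.1 : ℝ≥0∞))⁻¹ := by
    intro x
    have hx1 : 1 ≤ x.1 := by have := x.2; omega
    rw [ENNReal.tsum_mul_right]
    congr 1
    exact (lemA p x.1 hx1).symm
  rw [tsum_congr hR, ENNReal.tsum_comm]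
  apply tsum_congr
  intro m
  have hm1 : 1 ≤ m.1 := by have := m.2; omega
  symm
  calc ∑' x : {x : ℕ // ν ≤ x}, bb m.1 x.1 * ((m.1 : ℝ≥0∞))⁻¹ * ((x.1 : ℝ≥0∞))⁻¹
      = (∑' x : {x : ℕ // ν ≤ x}, bb m.1 x.1 * ((x.1 : ℝ≥0∞))⁻¹) * ((m.1 : ℝ≥0∞))⁻¹ := by
        rw [← ENNReal.tsum_mul_right]
        exact tsum_congr fun x => by ring
    _ = bb m.1 (ν - 1) * ((m.1 : ℝ≥0∞))⁻¹ * ((m.1 : ℝ≥0∞))⁻¹ := by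
        rw [lemA'_le m.1 ν hm1 hν]


/-- first entry of a tuple, or 0 -/
def topC {n : ℕ} (c : Fin n → ℕ) : ℕ := if h : 0 < n then c ⟨0, h⟩ else 0

def okL (j : ℕ) (c : Fin (2 * j) → ℕ) : Prop :=
  (∀ i, 1 ≤ c i) ∧ ∀ i i' : Fin (2 * j), i'.val = i.val + 1 →
    (if i.val % 2 = 0 then c i' ≤ c i else c i' < c i)

def LC (j : ℕ) := {c : Fin (2 * j) → ℕ // okL j c}

def Bf (j ν : ℕ) : ℝ≥0∞ :=
  ∑' c : LC j, (∏ i, ((c.1 i : ℝ≥0∞))⁻¹) * bb (topC c.1) ν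

def okS (j ν : ℕ) (w : Fin j → ℕ) : Prop :=
  (∀ i i' : Fin j, i'.val = i.val + 1 → w i' ≤ w i) ∧ ∀ h : 0 < j, ν ≤ w ⟨j - 1, by omega⟩

def SC (j ν : ℕ) := {w : Fin j → ℕ // okS j ν w}

def Sf (j ν : ℕ) : ℝ≥0∞ :=
  ∑' w : SC j ν, ∏ i, (((w.1 i : ℝ≥0∞)) * (w.1 i))⁻¹

/-! ### L-side splitting -/

def buildL {j : ℕ} (c : Fin (2 * j) → ℕ) (q : ℕ × ℕ) : Fin (2 * (j + 1)) → ℕ :=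
  fun i => if h0 : i.val = 0 then q.1 else if h1 : i.val = 1 then q.2
    else c ⟨i.val - 2, by have := i.2; omega⟩

lemma buildL_at0 {j : ℕ} (c : Fin (2 * j) → ℕ) (q : ℕ × ℕ) (i : Fin (2 * (j + 1)))
    (h : i.val = 0) : buildL c q i = q.1 := by
  simp only [buildL]; rw [dif_pos h]

lemma buildL_at1 {j : ℕ} (c : Fin (2 * j) → ℕ) (q : ℕ × ℕ) (i : Fin (2 * (j + 1)))
    (h : i.val = 1) : buildL c q i = q.2 := by
  simp only [buildL]; rw [dif_neg (by omega), dif_pos h]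

lemma buildL_at2 {j : ℕ} (c : Fin (2 * j) → ℕ) (q : ℕ × ℕ) (i : Fin (2 * (j + 1)))
    (h : 2 ≤ i.val) : buildL c q i = c ⟨i.val - 2, by have := i.2; omega⟩ := by
  simp only [buildL]; rw [dif_neg (by omega), dif_neg (by omega)]

def restL {j : ℕ} (d : Fin (2 * (j + 1)) → ℕ) : Fin (2 * j) → ℕ :=
  fun i => d ⟨i.val + 2, by have := i.2; omega⟩

lemma okL_build {j : ℕ} {c : Fin (2 * j) → ℕ} {q : ℕ × ℕ} (hc : okL j c)
    (h1 : q.2 ≤ q.1) (h2 : topC c < q.2) : okL (j + 1) (buildL c q) := by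
  constructor
  · intro i
    by_cases i0 : i.val = 0
    · rw [buildL_at0 c q i i0]; omega
    by_cases i1 : i.val = 1
    · rw [buildL_at1 c q i i1]; omega
    · rw [buildL_at2 c q i (by omega)]; exact hc.1 _
  · intro i i' hii
    by_cases i0 : i.val = 0
    · rw [buildL_at0 c q i i0, buildL_at1 c q i' (by omega), if_pos (by omega)]
      exact h1
    by_cases i1 : i.val = 1
    · have hi'2 : i'.val = 2 := by omega
      have hj : 0 < 2 * j := by have := i'.2; omega
      rw [buildL_at1 c q i i1, buildL_at2 c q i' (by omega), if_neg (by omega)]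
      have htop : c ⟨i'.val - 2, by have := i'.2; omega⟩ = topC c := by
        simp only [topC, dif_pos hj]
        exact congrArg c (Fin.ext (by simp [hi'2]))
      rw [htop]
      exact h2
    · have hi2 : 2 ≤ i.val := by omega
      have hlt : i.val - 2 < 2 * j := by have := i'.2; omega
      have hlt' : i'.val - 2 < 2 * j := by have := i'.2; omega
      have key : if (i.val - 2) % 2 = 0
          then c ⟨i'.val - 2, hlt'⟩ ≤ c ⟨i.val - 2, hlt⟩
          else c ⟨i'.val - 2, hlt'⟩ < c ⟨i.val - 2, hlt⟩ :=
        hc.2 ⟨i.val - 2, hlt⟩ ⟨i'.val - 2, hlt'⟩ (by simp only [Fin.val_mk] <;> omega)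
      rw [buildL_at2 c q i (by omega), buildL_at2 c q i' (by omega)]
      by_cases hp : i.val % 2 = 0
      · rw [if_pos hp]; rw [if_pos (by omega)] at key; exact key
      · rw [if_neg hp]; rw [if_neg (by omega)] at key; exact key

lemma okL_rest {j : ℕ} {d : Fin (2 * (j + 1)) → ℕ} (hd : okL (j + 1) d) : okL j (restL d) := by
  constructor
  · intro i; exact hd.1 _
  · intro i i' hii
    have key := hd.2 ⟨i.val + 2, by have := i.2; omega⟩ ⟨i'.val + 2, by have := i'.2; omega⟩
      (by simp only [Fin.val_mk] <;> omega)
    by_cases hp : i.val % 2 = 0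
    · rw [if_pos hp]; rw [if_pos (by simp only [Fin.val_mk] <;> omega)] at key; exact key
    · rw [if_neg hp]; rw [if_neg (by simp only [Fin.val_mk] <;> omega)] at key; exact key

lemma okL_pair {j : ℕ} {d : Fin (2 * (j + 1)) → ℕ} (hd : okL (j + 1) d) :
    d ⟨1, by omega⟩ ≤ d ⟨0, by omega⟩ ∧ topC (restL d) < d ⟨1, by omega⟩ := by
  constructor
  · have := hd.2 ⟨0, by omega⟩ ⟨1, by omega⟩ (by simp only [Fin.val_mk])
    rw [if_pos (show (⟨0, by omega⟩ : Fin (2*(j+1))).val % 2 = 0 by simp only [Fin.val_mk])] at this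
    exact this
  · by_cases hj : 0 < 2 * j
    · have key := hd.2 ⟨1, by omega⟩ ⟨2, by omega⟩ (by simp only [Fin.val_mk])
      rw [if_neg (by simp only [Fin.val_mk] <;> omega)] at key
      have : topC (restL d) = d ⟨2, by omega⟩ := by
        simp only [topC, dif_pos hj, restL]
      rw [this]
      exact key
    · have h1 : 1 ≤ d ⟨1, by omega⟩ := hd.1 _
      have : topC (restL d) = 0 := by simp only [topC, dif_neg (by omega : ¬ 0 < 2*j)]
      rw [this]
      omega

def eL (j : ℕ) : (Σ c : LC j, {q : ℕ × ℕ // q.2 ≤ q.1 ∧ topC c.1 < q.2}) ≃ LC (j + 1) where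
  toFun x := ⟨buildL x.1.1 x.2.1, okL_build x.1.2 x.2.2.1 x.2.2.2⟩
  invFun d := ⟨⟨restL d.1, okL_rest d.2⟩,
    ⟨(d.1 ⟨0, by omega⟩, d.1 ⟨1, by omega⟩), (okL_pair d.2).1, (okL_pair d.2).2⟩⟩
  left_inv x := by
    rcases x with ⟨⟨c, hc⟩, ⟨⟨q1, q2⟩, hq⟩⟩
    have hbase : restL (buildL c (q1, q2)) = c := by
      funext i
      rw [show restL (buildL c (q1, q2)) i
          = buildL c (q1, q2) ⟨i.val + 2, by have := i.2; omega⟩ from rfl,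
        buildL_at2 c (q1, q2) _ (by simp only [Fin.val_mk] <;> omega)]
      exact congrArg c (Fin.ext (by simp only [Fin.val_mk] <;> omega))
    dsimp only
    apply Sigma.ext
    · exact Subtype.ext hbase
    · rw [Subtype.heq_iff_coe_eq (fun x => by
        show x.2 ≤ x.1 ∧ topC (restL (buildL c (q1, q2))) < x.2
          ↔ x.2 ≤ x.1 ∧ topC c < x.2
        rw [hbase])]
      show (buildL c (q1, q2) ⟨0, by omega⟩, buildL c (q1, q2) ⟨1, by omega⟩) = (q1, q2)
      rw [buildL_at0 c _ _ rfl, buildL_at1 c _ _ rfl]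
  right_inv d := by
    apply Subtype.ext
    funext i
    dsimp only
    by_cases i0 : i.val = 0
    · rw [buildL_at0 _ _ i i0]
      exact congrArg d.1 (Fin.ext i0.symm)
    by_cases i1 : i.val = 1
    · rw [buildL_at1 _ _ i i1]
      exact congrArg d.1 (Fin.ext i1.symm)
    · rw [buildL_at2 _ _ i (by omega)]
      rw [show restL d.1 ⟨i.val - 2, by have := i.2; omega⟩
          = d.1 ⟨i.val - 2 + 2, by have := i.2; omega⟩ from rfl]
      exact congrArg d.1 (Fin.ext (by simp only [Fin.val_mk] <;> omega))

lemma prod_split2 {j : ℕ} (f : Fin (2 * (j + 1)) → ℝ≥0∞) :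
    ∏ i, f i = f ⟨0, by omega⟩ * f ⟨1, by omega⟩
      * ∏ i : Fin (2 * j), f ⟨i.val + 2, by have := i.2; omega⟩ := by
  show (∏ i : Fin (2 * j + 1 + 1), f i) = _
  rw [Fin.prod_univ_succ (f := fun i : Fin (2 * j + 1 + 1) => f i)]
  rw [Fin.prod_univ_succ (f := fun i : Fin (2 * j + 1) => f i.succ)]
  rw [mul_assoc]
  refine congrArg₂ (· * ·) (congrArg f (Fin.ext ?_)) (congrArg₂ (· * ·) (congrArg f (Fin.ext ?_))
    (Finset.prod_congr rfl fun i _ => congrArg f (Fin.ext ?_))) <;> simp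

lemma Bf_succ (j ν : ℕ) (hν : 1 ≤ ν) :
    Bf (j + 1) ν = ∑' x : {x : ℕ // ν ≤ x},
      ((x.1 : ℝ≥0∞))⁻¹ * ((x.1 : ℝ≥0∞))⁻¹ * Bf j x.1 := by
  rw [Bf, ← Equiv.tsum_eq (eL j)]
  have hre : ∀ x : Σ c : LC j, {q : ℕ × ℕ // q.2 ≤ q.1 ∧ topC c.1 < q.2},
      (∏ i, ((((eL j) x).1 i : ℝ≥0∞))⁻¹) * bb (topC ((eL j) x).1) ν
      = (∏ i, ((x.1.1 i : ℝ≥0∞))⁻¹) *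
          (bb x.2.1.1 ν * ((x.2.1.1 : ℝ≥0∞))⁻¹ * ((x.2.1.2 : ℝ≥0∞))⁻¹) := by
    rintro ⟨⟨c, hc⟩, ⟨⟨q1, q2⟩, hq⟩⟩
    have he : ((eL j) ⟨⟨c, hc⟩, ⟨(q1, q2), hq⟩⟩).1 = buildL c (q1, q2) := rfl
    rw [he]
    have htop : topC (buildL c (q1, q2)) = q1 := by
      simp only [topC, dif_pos (by omega : 0 < 2 * (j + 1))]
      exact buildL_at0 c _ _ rfl
    rw [htop]
    rw [prod_split2 (f := fun i => ((buildL c (q1, q2) i : ℝ≥0∞))⁻¹)]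
    rw [buildL_at0 c _ _ rfl, buildL_at1 c _ _ rfl]
    have hc2 : ∀ i : Fin (2 * j), buildL c (q1, q2) ⟨i.val + 2, by have := i.2; omega⟩ = c i := by
      intro i
      rw [buildL_at2 c _ _ (by simp only [Fin.val_mk] <;> omega)]
      exact congrArg c (Fin.ext (by simp only [Fin.val_mk] <;> omega))
    rw [Finset.prod_congr rfl (fun i _ => by rw [hc2 i])]
    ring
  rw [tsum_congr hre]
  rw [ENNReal.tsum_sigma'
    (f := fun x : Σ c : LC j, {q : ℕ × ℕ // q.2 ≤ q.1 ∧ topC c.1 < q.2} =>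
      (∏ i, ((x.1.1 i : ℝ≥0∞))⁻¹) *
        (bb x.2.1.1 ν * ((x.2.1.1 : ℝ≥0∞))⁻¹ * ((x.2.1.2 : ℝ≥0∞))⁻¹))]
  have hinner : ∀ c : LC j,
      ∑' q : {q : ℕ × ℕ // q.2 ≤ q.1 ∧ topC c.1 < q.2},
        (∏ i, ((c.1 i : ℝ≥0∞))⁻¹) *
          (bb q.1.1 ν * ((q.1.1 : ℝ≥0∞))⁻¹ * ((q.1.2 : ℝ≥0∞))⁻¹)
      = ∑' x : {x : ℕ // ν ≤ x},
          (∏ i, ((c.1 i : ℝ≥0∞))⁻¹) *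
            (bb (topC c.1) x.1 * ((x.1 : ℝ≥0∞))⁻¹ * ((x.1 : ℝ≥0∞))⁻¹) := by
    intro c
    rw [ENNReal.tsum_mul_left, ENNReal.tsum_mul_left, lemD (topC c.1) ν hν]
  rw [tsum_congr hinner, ENNReal.tsum_comm]
  apply tsum_congr
  intro x
  rw [Bf, ← ENNReal.tsum_mul_left]
  apply tsum_congr
  intro c
  ring

/-! ### S-side splitting -/

def buildS {j : ℕ} (w : Fin j → ℕ) (x : ℕ) : Fin (j + 1) → ℕ :=
  fun i => if h : i.val < j then w ⟨i.val, h⟩ else x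

lemma buildS_lt {j : ℕ} (w : Fin j → ℕ) (x : ℕ) (i : Fin (j + 1)) (h : i.val < j) :
    buildS w x i = w ⟨i.val, h⟩ := by
  simp only [buildS]; rw [dif_pos h]

lemma buildS_last {j : ℕ} (w : Fin j → ℕ) (x : ℕ) (i : Fin (j + 1)) (h : ¬ i.val < j) :
    buildS w x i = x := by
  simp only [buildS]; rw [dif_neg h]

def restS {j : ℕ} (d : Fin (j + 1) → ℕ) : Fin j → ℕ :=
  fun i => d ⟨i.val, by omega⟩

lemma okS_build {j ν : ℕ} {w : Fin j → ℕ} {x : ℕ} (hw : okS j x w) (hx : ν ≤ x) :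
    okS (j + 1) ν (buildS w x) := by
  constructor
  · intro i i' hii
    by_cases hi' : i'.val < j
    · have hi : i.val < j := by omega
      rw [buildS_lt w x i hi, buildS_lt w x i' hi']
      exact hw.1 ⟨i.val, hi⟩ ⟨i'.val, hi'⟩ (by simp only [Fin.val_mk] <;> omega)
    · have hj : 0 < j := by have := i'.2; omega
      have hi : i.val < j := by have := i'.2; omega
      rw [buildS_lt w x i hi, buildS_last w x i' hi']
      have := hw.2 hj
      have hieq : (⟨i.val, hi⟩ : Fin j) = ⟨j - 1, by omega⟩ := Fin.ext (by
        simp only [Fin.val_mk]; have := i'.2; omega)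
      rw [hieq]
      exact this
  · intro h
    rw [buildS_last w x _ (by simp only [Fin.val_mk] <;> omega)]
    exact hx

lemma okS_rest {j ν : ℕ} {d : Fin (j + 1) → ℕ} (hd : okS (j + 1) ν d) :
    okS j (d ⟨j, by omega⟩) (restS d) := by
  constructor
  · intro i i' hii
    exact hd.1 ⟨i.val, by omega⟩ ⟨i'.val, by omega⟩ (by simp only [Fin.val_mk] <;> omega)
  · intro h
    exact hd.1 ⟨j - 1, by omega⟩ ⟨j, by omega⟩ (by show j = j - 1 + 1; omega)

lemma SC_heq {j a b : ℕ} {w1 w2 : Fin j → ℕ} (h1 : okS j a w1) (h2 : okS j b w2)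
    (ha : a = b) (hw : w1 = w2) : HEq (⟨w1, h1⟩ : SC j a) (⟨w2, h2⟩ : SC j b) := by
  subst ha; subst hw; rfl

def eS (j ν : ℕ) : (Σ x : {x : ℕ // ν ≤ x}, SC j x.1) ≃ SC (j + 1) ν where
  toFun p := ⟨buildS p.2.1 p.1.1, okS_build p.2.2 p.1.2⟩
  invFun d := ⟨⟨d.1 ⟨j, by omega⟩, by
      simpa using d.2.2 (by omega)⟩, ⟨restS d.1, okS_rest d.2⟩⟩
  left_inv p := by
    rcases p with ⟨⟨x, hx⟩, ⟨w, hw⟩⟩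
    have hbase : buildS w x ⟨j, by omega⟩ = x := buildS_last w x _ (by simp)
    have hrest : restS (buildS w x) = w := by
      funext i
      rw [show restS (buildS w x) i = buildS w x ⟨i.val, by omega⟩ from rfl,
        buildS_lt w x _ i.2]
      try exact congrArg w (Fin.ext rfl)
    dsimp only
    apply Sigma.ext
    · exact Subtype.ext hbase
    · exact SC_heq _ _ hbase hrest
  right_inv d := by
    apply Subtype.ext
    funext i
    dsimp only
    by_cases hi : i.val < j
    · rw [buildS_lt _ _ i hi]
      exact congrArg d.1 (Fin.ext rfl)
    · rw [buildS_last _ _ i hi]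
      exact congrArg d.1 (Fin.ext (by simp only [Fin.val_mk]; have := i.2; omega)).symm

lemma Sf_succ (j ν : ℕ) :
    Sf (j + 1) ν = ∑' x : {x : ℕ // ν ≤ x},
      ((x.1 : ℝ≥0∞))⁻¹ * ((x.1 : ℝ≥0∞))⁻¹ * Sf j x.1 := by
  rw [Sf, ← Equiv.tsum_eq (eS j ν)]
  have hre : ∀ p : Σ x : {x : ℕ // ν ≤ x}, SC j x.1,
      (∏ i, ((((eS j ν) p).1 i : ℝ≥0∞) * (((eS j ν) p).1 i))⁻¹)
      = ((p.1.1 : ℝ≥0∞))⁻¹ * ((p.1.1 : ℝ≥0∞))⁻¹ *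
          ∏ i, ((p.2.1 i : ℝ≥0∞) * (p.2.1 i))⁻¹ := by
    rintro ⟨⟨x, hx⟩, ⟨w, hw⟩⟩
    rw [show ((eS j ν) ⟨⟨x, hx⟩, ⟨w, hw⟩⟩).1 = buildS w x from rfl]
    rw [Fin.prod_univ_castSucc (f := fun i => ((buildS w x i : ℝ≥0∞) * (buildS w x i))⁻¹)]
    have hlast : buildS w x (Fin.last j) = x := buildS_last w x _ (by simp [Fin.last])
    have hcast : ∀ i : Fin j, buildS w x i.castSucc = w i := by
      intro i
      rw [buildS_lt w x _ (by simpa using i.2)]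
      exact congrArg w (Fin.ext rfl)
    simp only [hlast]
    rw [Finset.prod_congr rfl (fun i _ => by rw [hcast i])]
    rw [ENNReal.mul_inv (Or.inr (by simp)) (Or.inl (by simp))]
    ring
  rw [tsum_congr hre]
  rw [ENNReal.tsum_sigma'
    (f := fun p : Σ x : {x : ℕ // ν ≤ x}, SC j x.1 =>
      ((p.1.1 : ℝ≥0∞))⁻¹ * ((p.1.1 : ℝ≥0∞))⁻¹ * ∏ i, ((p.2.1 i : ℝ≥0∞) * (p.2.1 i))⁻¹)]
  apply tsum_congr
  intro x
  dsimp only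
  rw [Sf, ENNReal.tsum_mul_left]

/-! ### B = S -/

instance : Unique (LC 0) where
  default := ⟨fun i => i.elim0, fun i => i.elim0, fun i _ _ => i.elim0⟩
  uniq a := by apply Subtype.ext; funext i; exact i.elim0

instance (ν : ℕ) : Unique (SC 0 ν) where
  default := ⟨fun i => i.elim0, fun i => i.elim0, fun h => absurd h (by omega)⟩
  uniq a := by apply Subtype.ext; funext i; exact i.elim0

lemma Bf_eq_Sf (j : ℕ) : ∀ ν : ℕ, 1 ≤ ν → Bf j ν = Sf j ν := by
  induction j with
  | zero =>
    intro ν hν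
    rw [Bf, Sf]
    rw [tsum_eq_single (default : LC 0) (fun b hb => absurd (Subsingleton.elim b default) hb),
      tsum_eq_single (default : SC 0 ν) (fun b hb => absurd (Subsingleton.elim b default) hb)]
    have : topC ((default : LC 0)).1 = 0 := by simp [topC]
    rw [this, bb_zero]
    simp
  | succ j ih =>
    intro ν hν
    rw [Bf_succ j ν hν, Sf_succ j ν]
    apply tsum_congr
    intro x
    rw [ih x.1 (le_trans hν x.2)]



lemma bb_zero'' (n : ℕ) : bb n 0 = 1 := by rw [bb_comm, bb_zero]

lemma Bf_def (j ν : ℕ) :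
    Bf j ν = ∑' c : LC j, (∏ i, ((c.1 i : ℝ≥0∞))⁻¹) * bb (topC c.1) ν := rfl

lemma Sf_def (j ν : ℕ) :
    Sf j ν = ∑' w : SC j ν, ∏ i, (((w.1 i : ℝ≥0∞)) * (w.1 i))⁻¹ := rfl

lemma eS_apply (j ν : ℕ) (p : Σ x : {x : ℕ // ν ≤ x}, SC j x.1) :
    ((eS j ν) p).1 = buildS p.2.1 p.1.1 := rfl

/-! ### real ↔ ennreal bridge -/

lemma tsum_real_eq {ι : Type*} (f : ι → ℝ) (hf : ∀ i, 0 ≤ f i) :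
    ∑' i, f i = (∑' i, ENNReal.ofReal (f i)).toReal := by
  by_cases h : Summable f
  · rw [← ENNReal.ofReal_tsum_of_nonneg hf h, ENNReal.toReal_ofReal (tsum_nonneg hf)]
  · rw [tsum_eq_zero_of_not_summable h]
    symm
    rw [ENNReal.toReal_eq_zero_iff]
    right
    by_contra h'
    apply h
    have := ENNReal.summable_toReal h'
    have heq : (fun i => (ENNReal.ofReal (f i)).toReal) = f := by
      funext i; exact ENNReal.toReal_ofReal (hf i)
    rwa [heq] at this

lemma lemA1 (m : ℕ) (hm : 1 ≤ m) :
    ∑' x : {x : ℕ // 1 ≤ x}, bb m x.1 * ((x.1 : ℝ≥0∞))⁻¹ = ((m : ℝ≥0∞))⁻¹ := by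
  have h := lemA' m 0 hm
  rw [bb_zero'', one_mul] at h
  exact h

/-! ### conversion of LHS summand -/

lemma ofReal_L (k : ℕ) (hk : 1 ≤ k) (c : Fin (2 * k) → ℕ) (hc : ∀ i, 1 ≤ c i) :
    ENNReal.ofReal (1 / ((c ⟨0, by have := hc; omega⟩ : ℝ) * ∏ i, (c i : ℝ)))
      = (∏ i, ((c i : ℝ≥0∞))⁻¹) * ((topC c : ℝ≥0∞))⁻¹ := by
  have hpos : ∀ i, (0 : ℝ) < c i := fun i => by exact_mod_cast hc i
  have hP : (0 : ℝ) < ∏ i, (c i : ℝ) := Finset.prod_pos fun i _ => hpos i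
  have hne : ∀ i : Fin (2 * k), ((c i : ℕ) : ℝ≥0∞) ≠ 0 := by
    intro i
    have := hc i
    exact_mod_cast (by omega : c i ≠ 0)
  rw [one_div, ENNReal.ofReal_inv_of_pos (mul_pos (hpos _) hP),
    ENNReal.ofReal_mul (le_of_lt (hpos _)),
    ENNReal.ofReal_prod_of_nonneg (fun i _ => le_of_lt (hpos i))]
  have hcast : ∀ i : Fin (2 * k), ENNReal.ofReal ((c i : ℝ)) = ((c i : ℕ) : ℝ≥0∞) := by
    intro i; exact ENNReal.ofReal_natCast _
  rw [Finset.prod_congr rfl (fun i _ => hcast i), ENNReal.ofReal_natCast]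
  rw [ENNReal.mul_inv (Or.inl (hne _)) (Or.inl (by simp))]
  rw [ENNReal.prod_inv_distrib (fun i _ j _ _ => Or.inl (hne i))]
  rw [mul_comm]
  congr 1
  have h2k : 0 < 2 * k := by omega
  simp only [topC, dif_pos h2k]

/-! ### conversion of RHS summand -/

lemma okS_entries {j ν : ℕ} {w : Fin j → ℕ} (h : okS j ν w) : ∀ i : Fin j, ν ≤ w i := by
  have key : ∀ t : ℕ, ∀ i : Fin j, i.val + t = j - 1 → ν ≤ w i := by
    intro t
    induction t with
    | zero =>
      intro i hi
      have h0 : 0 < j := i.pos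
      have : i = ⟨j - 1, by omega⟩ := Fin.ext (by simp only [Fin.val_mk]; omega)
      rw [this]
      exact h.2 h0
    | succ t iht =>
      intro i hi
      have hlt : i.val + 1 < j := by have := i.2; omega
      have h1 := iht ⟨i.val + 1, hlt⟩ (by simp only [Fin.val_mk]; omega)
      have h2 := h.1 i ⟨i.val + 1, hlt⟩ (by simp only [Fin.val_mk])
      omega
  intro i
  exact key (j - 1 - i.val) i (by have := i.2; omega)

lemma ofReal_R (k : ℕ) (w : Fin (k + 1) → ℕ) (hw : ∀ i, 1 ≤ w i) :
    ENNReal.ofReal (1 / ((∏ i : Fin k, ((w i.castSucc : ℝ)) ^ 2) * (w (Fin.last k) : ℝ)))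
      = (∏ i : Fin k, ((w i.castSucc : ℝ≥0∞) * (w i.castSucc : ℝ≥0∞))⁻¹)
        * ((w (Fin.last k) : ℝ≥0∞))⁻¹ := by
  have hpos : ∀ i, (0 : ℝ) < w i := fun i => by exact_mod_cast hw i
  have hPP : (0 : ℝ) < ∏ i : Fin k, ((w i.castSucc : ℝ)) ^ 2 :=
    Finset.prod_pos fun i _ => pow_pos (hpos _) 2
  have hne : ∀ i : Fin k, ((w i.castSucc : ℝ≥0∞) * (w i.castSucc : ℝ≥0∞)) ≠ 0 := by
    intro i
    have h1 : ((w i.castSucc : ℕ) : ℝ≥0∞) ≠ 0 := by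
      have := hw i.castSucc
      exact_mod_cast (by omega : w i.castSucc ≠ 0)
    simp only [ne_eq, mul_eq_zero, not_or]
    exact ⟨h1, h1⟩
  have hlastne : ((w (Fin.last k) : ℕ) : ℝ≥0∞) ≠ 0 := by
    have := hw (Fin.last k)
    exact_mod_cast (by omega : w (Fin.last k) ≠ 0)
  rw [one_div, ENNReal.ofReal_inv_of_pos (mul_pos hPP (hpos _)),
    ENNReal.ofReal_mul (le_of_lt hPP),
    ENNReal.ofReal_prod_of_nonneg (fun i _ => sq_nonneg _)]
  have hcast : ∀ i : Fin k, ENNReal.ofReal ((w i.castSucc : ℝ) ^ 2)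
      = ((w i.castSucc : ℝ≥0∞) * (w i.castSucc : ℝ≥0∞)) := by
    intro i
    rw [sq, ENNReal.ofReal_mul (by positivity), ENNReal.ofReal_natCast]
  rw [Finset.prod_congr rfl (fun i _ => hcast i), ENNReal.ofReal_natCast]
  rw [ENNReal.mul_inv (Or.inr (ENNReal.natCast_ne_top _)) (Or.inr hlastne)]
  rw [ENNReal.prod_inv_distrib (fun i _ j _ _ => Or.inl (hne i))]

lemma okS_iff (k : ℕ) (m : Fin (k + 1) → ℕ) :
    ((∀ i : Fin k, m i.succ ≤ m i.castSucc) ∧ 1 ≤ m (Fin.last k)) ↔ okS (k + 1) 1 m := by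
  constructor
  · rintro ⟨h1, h2⟩
    constructor
    · intro i i' hii
      have hik : i.val < k := by have := i'.2; omega
      have := h1 ⟨i.val, hik⟩
      have e1 : (⟨i.val, hik⟩ : Fin k).succ = i' := Fin.ext (by
        simp only [Fin.val_succ, Fin.val_mk]; omega)
      have e2 : (⟨i.val, hik⟩ : Fin k).castSucc = i := Fin.ext (by
        simp only [Fin.coe_castSucc, Fin.val_mk])
      rwa [e1, e2] at this
    · intro h
      have : (⟨k + 1 - 1, by omega⟩ : Fin (k + 1)) = Fin.last k := Fin.ext (by
        simp only [Fin.val_mk, Fin.val_last]; omega)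
      rw [this]
      exact h2
  · rintro ⟨h1, h2⟩
    constructor
    · intro i
      exact h1 i.castSucc i.succ (by
        simp only [Fin.val_succ, Fin.coe_castSucc])
    · have := h2 (by omega)
      have e : (⟨k + 1 - 1, by omega⟩ : Fin (k + 1)) = Fin.last k := Fin.ext (by
        simp only [Fin.val_mk, Fin.val_last]; omega)
      rwa [e] at this

def eR (k : ℕ) : {m : Fin (k + 1) → ℕ //
    (∀ i : Fin k, m i.succ ≤ m i.castSucc) ∧ 1 ≤ m (Fin.last k)} ≃ SC (k + 1) 1 :=
  Equiv.subtypeEquivRight (okS_iff k)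

lemma eR_symm_coe (k : ℕ) (w : SC (k + 1) 1) : ((eR k).symm w).1 = w.1 := rfl

end ExtendedMZVAux

/-! ### the theorem -/

/-- The extended MZV ζ^{(ℓs)^{k-1}ℓ}_{2 1...1} (one 2 followed by 2k-1 ones, inequality
pattern alternating ℓ,s,...,ℓ) equals ζ^{ℓ...ℓ}_{2...2 1} (k twos then a one, all non-strict). -/
theorem extended_mzv_alternating_eq_all_large (k : ℕ) (hk : 1 ≤ k) :
    (∑' m : {m : Fin (2 * k) → ℕ // (∀ i, 1 ≤ m i) ∧
        ∀ i j : Fin (2 * k), j.val = i.val + 1 →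
          (if i.val % 2 = 0 then m j ≤ m i else m j < m i)},
      (1 : ℝ) / ((m.1 ⟨0, by omega⟩ : ℝ) * ∏ j, (m.1 j : ℝ)))
      = ∑' m : {m : Fin (k + 1) → ℕ //
          (∀ i : Fin k, m i.succ ≤ m i.castSucc) ∧ 1 ≤ m (Fin.last k)},
        (1 : ℝ) / ((∏ j : Fin k, ((m.1 j.castSucc : ℝ)) ^ 2) * (m.1 (Fin.last k) : ℝ)) := by
  rw [tsum_real_eq _ (fun m => by positivity), tsum_real_eq _ (fun m => by positivity)]
  congr 1
  -- Left side in ℝ≥0∞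
  have hL : (∑' m : {m : Fin (2 * k) → ℕ // (∀ i, 1 ≤ m i) ∧
        ∀ i j : Fin (2 * k), j.val = i.val + 1 →
          (if i.val % 2 = 0 then m j ≤ m i else m j < m i)},
      ENNReal.ofReal ((1 : ℝ) / ((m.1 ⟨0, by omega⟩ : ℝ) * ∏ j, (m.1 j : ℝ))))
      = ∑' x : {x : ℕ // 1 ≤ x}, ((x.1 : ℝ≥0∞))⁻¹ * Bf k x.1 := by
    have step1 : (∑' c : LC k,
        ENNReal.ofReal ((1 : ℝ) / ((c.1 ⟨0, by omega⟩ : ℝ) * ∏ j, (c.1 j : ℝ))))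
        = ∑' c : LC k, (∏ i, ((c.1 i : ℝ≥0∞))⁻¹) * ((topC c.1 : ℝ≥0∞))⁻¹ :=
      tsum_congr fun c => ofReal_L k hk c.1 c.2.1
    have step2 : (∑' c : LC k, (∏ i, ((c.1 i : ℝ≥0∞))⁻¹) * ((topC c.1 : ℝ≥0∞))⁻¹)
        = ∑' x : {x : ℕ // 1 ≤ x}, ((x.1 : ℝ≥0∞))⁻¹ * Bf k x.1 := by
      have hpt : ∀ c : LC k, (∏ i, ((c.1 i : ℝ≥0∞))⁻¹) * ((topC c.1 : ℝ≥0∞))⁻¹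
          = ∑' x : {x : ℕ // 1 ≤ x},
              (∏ i, ((c.1 i : ℝ≥0∞))⁻¹) * (bb (topC c.1) x.1 * ((x.1 : ℝ≥0∞))⁻¹) := by
        intro c
        rw [ENNReal.tsum_mul_left]
        congr 1
        have htop1 : 1 ≤ topC c.1 := by
          have := c.2.1 ⟨0, by omega⟩
          simp only [topC, dif_pos (by omega : 0 < 2 * k)]
          exact this
        exact (lemA1 (topC c.1) htop1).symm
      rw [tsum_congr hpt, ENNReal.tsum_comm]
      apply tsum_congr
      intro x
      rw [Bf_def, ← ENNReal.tsum_mul_left]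
      apply tsum_congr
      intro c
      ring
    exact step1.trans step2
  -- Right side in ℝ≥0∞
  have hR : (∑' m : {m : Fin (k + 1) → ℕ //
          (∀ i : Fin k, m i.succ ≤ m i.castSucc) ∧ 1 ≤ m (Fin.last k)},
      ENNReal.ofReal ((1 : ℝ) /
        ((∏ j : Fin k, ((m.1 j.castSucc : ℝ)) ^ 2) * (m.1 (Fin.last k) : ℝ))))
      = ∑' x : {x : ℕ // 1 ≤ x}, ((x.1 : ℝ≥0∞))⁻¹ * Sf k x.1 := by
    rw [← Equiv.tsum_eq (eR k).symm]
    have step1 : ∀ w : SC (k + 1) 1,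
        ENNReal.ofReal ((1 : ℝ) /
          ((∏ j : Fin k, ((((eR k).symm w).1 j.castSucc : ℝ)) ^ 2)
            * ((((eR k).symm w).1 (Fin.last k)) : ℝ)))
        = (∏ i : Fin k, ((w.1 i.castSucc : ℝ≥0∞) * (w.1 i.castSucc : ℝ≥0∞))⁻¹)
            * ((w.1 (Fin.last k) : ℝ≥0∞))⁻¹ := by
      intro w
      rw [eR_symm_coe]
      exact ofReal_R k w.1 (fun i => okS_entries w.2 i)
    rw [tsum_congr step1]
    -- split off the last entry using eS
    rw [← Equiv.tsum_eq (eS k 1)]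
    have step2 : ∀ p : Σ x : {x : ℕ // 1 ≤ x}, SC k x.1,
        (∏ i : Fin k, ((((eS k 1) p).1 i.castSucc : ℝ≥0∞)
            * (((eS k 1) p).1 i.castSucc : ℝ≥0∞))⁻¹)
          * ((((eS k 1) p).1 (Fin.last k) : ℝ≥0∞))⁻¹
        = ((p.1.1 : ℝ≥0∞))⁻¹ * ((∏ i : Fin k, ((p.2.1 i : ℝ≥0∞) * (p.2.1 i : ℝ≥0∞))⁻¹)) := by
      rintro ⟨⟨x, hx⟩, ⟨w, hw⟩⟩
      rw [eS_apply]
      have hlast : buildS w x (Fin.last k) = x := buildS_last w x _ (by simp [Fin.last])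
      have hcs : ∀ i : Fin k, buildS w x i.castSucc = w i := by
        intro i
        rw [buildS_lt w x _ (by simpa using i.2)]
        exact congrArg w (Fin.ext rfl)
      rw [hlast, Finset.prod_congr rfl (fun i _ => by rw [hcs i])]
      ring
    rw [tsum_congr step2]
    rw [ENNReal.tsum_sigma'
      (f := fun p : Σ x : {x : ℕ // 1 ≤ x}, SC k x.1 =>
        ((p.1.1 : ℝ≥0∞))⁻¹ * ((∏ i : Fin k, ((p.2.1 i : ℝ≥0∞) * (p.2.1 i : ℝ≥0∞))⁻¹)))]
    apply tsum_congr
    intro x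
    dsimp only
    rw [Sf_def, ENNReal.tsum_mul_left]
  rw [hL, hR]
  apply tsum_congr
  intro x
  rw [Bf_eq_Sf k x.1 x.2]
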